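/- Let n ≥ 1, k ≥ 2 and let π = (π_{12},…,π_{1k}) be a (k−1)-tuple of permutations of {1,…,n}, with π_{11} = id. The set of meet-irreducible elements of the π-coordinatized lattice C(π) is exactly { (π_{11}(i) − 1, π_{12}(i) − 1, …, π_{1k}(i) − 1) : i ∈ {1,…,n} }. -/

import Mathlib

/-- The initial segment `{σ(1), …, σ(j)}` of a permutation `σ` of `{1,…,n}`
(encoded on `Fin n`), as a finset; for `j = 0` this is `∅`. -/
def iniSeg {n : ℕ} (σ : Equiv.Perm (Fin n)) (j : ℕ) : Finset (Fin n) :=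
  (Finset.univ.filter fun m : Fin n => (m : ℕ) < j).image σ

/-- The Edelman–Jamison lattice `E(σ)`: the join-subsemilattice of the powerset of
`{1,…,n}` (ordered by inclusion, with join `∪`) generated by the initial segments
`{σ_i(1),…,σ_i(j)}`, `1 ≤ i ≤ k`, `0 ≤ j ≤ n`. -/
def EJ {n k : ℕ} (σ : Fin k → Equiv.Perm (Fin n)) : Set (Finset (Fin n)) :=
  supClosure {S | ∃ (i : Fin k) (j : ℕ), j ≤ n ∧ S = iniSeg (σ i) j}

/-- `π`-eligibility of a `k`-tuple `x ∈ {0,…,n}^k`: `π_{ij}(x_i + 1) ≥ x_j + 1` holds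
whenever `x_i < n`, where `π_{ij} = π_{1j} ∘ π_{1i}⁻¹` (a value `v ∈ {1,…,n}` is encoded
as the element `v - 1` of `Fin n`). -/
def Eligible {n k : ℕ} (π : Fin k → Equiv.Perm (Fin n)) (x : Fin k → ℕ) : Prop :=
  (∀ i, x i ≤ n) ∧
    ∀ (i j : Fin k) (h : x i < n), x j + 1 ≤ ((π j) ((π i)⁻¹ ⟨x i, h⟩) : ℕ) + 1

section Aux
variable {n k : ℕ} (π : Fin k → Equiv.Perm (Fin n))

lemma elig_le {x : Fin k → ℕ} (hx : Eligible π x) {i : Fin k} (h : x i < n) (j : Fin k) :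
    x j ≤ ((π j) ((π i)⁻¹ ⟨x i, h⟩) : ℕ) :=
  Nat.succ_le_succ_iff.mp (hx.2 i j h)

lemma elig_min {x y : Fin k → ℕ} (hx : Eligible π x) (hy : Eligible π y) :
    Eligible π (fun j => min (x j) (y j)) := by
  refine ⟨fun j => le_trans (min_le_left _ _) (hx.1 j), fun a b h => ?_⟩
  rcases le_total (x a) (y a) with hle | hle
  · have hxa : min (x a) (y a) = x a := min_eq_left hle
    have h' : x a < n := by simpa [hxa] using h
    have hfin : (⟨min (x a) (y a), h⟩ : Fin n) = ⟨x a, h'⟩ := Fin.ext hxa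
    show min (x b) (y b) + 1 ≤ _
    rw [hfin]
    have h1 := elig_le π hx h' b
    have h2 := min_le_left (x b) (y b)
    omega
  · have hxa : min (x a) (y a) = y a := min_eq_right hle
    have h' : y a < n := by simpa [hxa] using h
    have hfin : (⟨min (x a) (y a), h⟩ : Fin n) = ⟨y a, h'⟩ := Fin.ext hxa
    show min (x b) (y b) + 1 ≤ _
    rw [hfin]
    have h1 := elig_le π hy h' b
    have h2 := min_le_right (x b) (y b)
    omega

lemma glb_iff {a b m : {x : Fin k → ℕ // Eligible π x}} :
    IsGLB {a, b} m ↔ ∀ j, m.val j = min (a.val j) (b.val j) := by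
  constructor
  · rintro ⟨hlb, hglb⟩
    have ha : m ≤ a := hlb (by simp)
    have hb : m ≤ b := hlb (by simp)
    have hz : (⟨fun j => min (a.val j) (b.val j), elig_min π a.2 b.2⟩ :
        {x : Fin k → ℕ // Eligible π x}) ≤ m := by
      apply hglb
      rintro c hc
      rcases hc with rfl | rfl
      · exact fun j => min_le_left _ _
      · exact fun j => min_le_right _ _
    intro j
    exact le_antisymm (le_min (ha j) (hb j)) (hz j)
  · intro h
    constructor
    · rintro c hc
      rcases hc with rfl | rfl
      · exact fun j => (h j) ▸ min_le_left _ _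
      · exact fun j => (h j) ▸ min_le_right _ _
    · intro z hz
      have hza : z ≤ a := hz (by simp)
      have hzb : z ≤ b := hz (by simp)
      exact fun j => (h j) ▸ le_min (hza j) (hzb j)

lemma elig_foldr (L : List (Fin k → ℕ)) (hL : ∀ x ∈ L, Eligible π x) :
    Eligible π (L.foldr (fun x y j => min (x j) (y j)) (fun _ => n)) := by
  induction L with
  | nil => exact ⟨fun j => le_refl n, fun a b h => absurd h (lt_irrefl n)⟩
  | cons x L ih =>
      exact elig_min π (hL x (by simp)) (ih fun y hy => hL y (by simp [hy]))

lemma irred_foldr (m : {x : Fin k → ℕ // Eligible π x})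
    (hirr : ∀ a b : {x : Fin k → ℕ // Eligible π x}, IsGLB {a, b} m → m = a ∨ m = b)
    (L : List (Fin k → ℕ)) (hL : ∀ x ∈ L, Eligible π x)
    (hm : m.val = L.foldr (fun x y j => min (x j) (y j)) (fun _ => n)) :
    m.val = (fun _ => n) ∨ ∃ x ∈ L, m.val = x := by
  induction L with
  | nil => exact Or.inl hm
  | cons x L ih =>
    have hx := hL x (by simp)
    have hL' : ∀ y ∈ L, Eligible π y := fun y hy => hL y (by simp [hy])
    have hglb : IsGLB {(⟨x, hx⟩ : {x : Fin k → ℕ // Eligible π x}),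
        ⟨_, elig_foldr π L hL'⟩} m := by
      rw [glb_iff]
      intro j
      exact congrFun hm j
    rcases hirr _ _ hglb with h | h
    · exact Or.inr ⟨x, by simp, congrArg Subtype.val h⟩
    · rcases ih hL' (congrArg Subtype.val h) with h' | ⟨y, hy, h'⟩
      · exact Or.inl h'
      · exact Or.inr ⟨y, by simp [hy], h'⟩

lemma le_foldr (L : List (Fin k → ℕ)) (z : Fin k → ℕ)
    (h1 : ∀ x ∈ L, ∀ j, z j ≤ x j) (h2 : ∀ j, z j ≤ n) (j : Fin k) :
    z j ≤ L.foldr (fun x y j => min (x j) (y j)) (fun _ => n) j := by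
  induction L with
  | nil => exact h2 j
  | cons x L ih =>
      exact le_min (h1 x (by simp) j) (ih fun y hy j' => h1 y (by simp [hy]) j')

lemma foldr_le (L : List (Fin k → ℕ)) {x : Fin k → ℕ} (hx : x ∈ L) (j : Fin k) :
    L.foldr (fun x y j => min (x j) (y j)) (fun _ => n) j ≤ x j := by
  induction L with
  | nil => cases hx
  | cons y L ih =>
    rcases List.mem_cons.mp hx with rfl | h
    · exact min_le_left _ _
    · exact le_trans (min_le_right _ _) (ih h)

lemma eq_of_coord {x : Fin k → ℕ} (hx : Eligible π x) (i : Fin n) (j0 : Fin k)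
    (hge : ∀ j, ((π j) i : ℕ) ≤ x j) (heq : x j0 = ((π j0) i : ℕ)) :
    x = fun j => ((π j) i : ℕ) := by
  have h0 : x j0 < n := heq ▸ (π j0 i).isLt
  have key : (π j0)⁻¹ ⟨x j0, h0⟩ = i := by
    have hf : (⟨x j0, h0⟩ : Fin n) = (π j0) i := Fin.ext heq
    rw [hf]; simp
  funext j
  exact le_antisymm (key ▸ elig_le π hx h0 j) (hge j)

end Aux

/-- Let `n ≥ 1`, `k ≥ 2` and let `π = (π_{12},…,π_{1k})` be a
`(k-1)`-tuple of permutations of `{1,…,n}` (encoded with `π 0 = id` playing the role of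
`π_{11}`). The meet-irreducible elements of the `π`-coordinatized lattice `C(π)` (the
non-top elements `m` such that whenever `m` is the greatest lower bound, i.e. the meet, of
two elements, it equals one of them) are exactly the tuples
`(π_{11}(i) - 1, …, π_{1k}(i) - 1)` for `i ∈ {1,…,n}`; in the `Fin n` encoding, the tuples
`j ↦ (π j) i` for `i : Fin n`. -/
theorem statement17 (n k : ℕ) (hn : 1 ≤ n) (hk : 2 ≤ k)
    (π : Fin k → Equiv.Perm (Fin n)) (hπ : π ⟨0, by omega⟩ = 1) :
    {m : {x : Fin k → ℕ // Eligible π x} | m.val ≠ (fun _ => n) ∧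
        ∀ a b : {x : Fin k → ℕ // Eligible π x}, IsGLB {a, b} m → m = a ∨ m = b} =
    {m : {x : Fin k → ℕ // Eligible π x} |
        ∃ i : Fin n, m.val = fun j => ((π j) i : ℕ)} := by
  ext m
  simp only [Set.mem_setOf_eq]
  constructor
  · rintro ⟨hne, hirr⟩
    obtain ⟨j0, hj0⟩ : ∃ j0, m.val j0 < n := by
      by_contra hcon
      push_neg at hcon
      exact hne (funext fun j => le_antisymm (m.2.1 j) (hcon j))
    have hall : ∀ j, m.val j < n := fun j =>
      lt_of_le_of_lt (elig_le π m.2 hj0 j) (((π j) ((π j0)⁻¹ ⟨m.val j0, hj0⟩)).isLt)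
    set c : Fin k → (Fin k → ℕ) :=
      fun j j' => ((π j') ((π j)⁻¹ ⟨m.val j, hall j⟩) : ℕ) with hc
    set L : List (Fin k → ℕ) := (List.finRange k).map c with hLdef
    have hLmem : ∀ x ∈ L, ∃ j, x = c j := by
      intro x hx
      rcases List.mem_map.mp hx with ⟨j, _, rfl⟩
      exact ⟨j, rfl⟩
    have hLel : ∀ x ∈ L, Eligible π x := by
      intro x hx
      rcases hLmem x hx with ⟨j, rfl⟩
      exact ⟨fun j' => le_of_lt (Fin.is_lt _), fun a b h => by
        have hfin : (⟨c j a, h⟩ : Fin n) = (π a) ((π j)⁻¹ ⟨m.val j, hall j⟩) := Fin.ext rfl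
        show c j b + 1 ≤ _
        rw [hfin]
        simp [hc]⟩
    have hm : m.val = L.foldr (fun x y j => min (x j) (y j)) (fun _ => n) := by
      funext j'
      refine le_antisymm ?_ ?_
      · refine le_foldr L m.val ?_ m.2.1 j'
        intro x hx j
        rcases hLmem x hx with ⟨j2, rfl⟩
        exact elig_le π m.2 (hall j2) j
      · have hmem : c j' ∈ L := List.mem_map.mpr ⟨j', List.mem_finRange j', rfl⟩
        have := foldr_le (n := n) L hmem j'
        have hcj : c j' j' = m.val j' := by
          show ((π j') ((π j')⁻¹ ⟨m.val j', hall j'⟩) : ℕ) = m.val j'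
          rw [← Equiv.Perm.mul_apply, mul_inv_cancel, Equiv.Perm.one_apply]
        exact le_trans this (le_of_eq hcj)
    rcases irred_foldr π m hirr L hLel hm with h | ⟨x, hx, h⟩
    · exact absurd h hne
    · rcases hLmem x hx with ⟨j, rfl⟩
      exact ⟨(π j)⁻¹ ⟨m.val j, hall j⟩, h⟩
  · rintro ⟨i, hi⟩
    have hlt : ∀ j, ((π j) i : ℕ) < n := fun j => ((π j) i).isLt
    constructor
    · intro hcon
      have h1 := congrFun hi ⟨0, by omega⟩
      have h2 := congrFun hcon ⟨0, by omega⟩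
      have h3 := hlt ⟨0, by omega⟩
      omega
    · intro a b hglb
      have hmin := (glb_iff π).mp hglb
      set j0 : Fin k := ⟨0, by omega⟩ with hj0def
      have hm0 := congrFun hi j0
      rcases le_total (a.val j0) (b.val j0) with hle | hle
      · left
        refine (Subtype.ext ?_).symm
        refine (eq_of_coord π a.2 i j0 ?_ ?_).trans hi.symm
        · intro j
          have := hmin j
          have := congrFun hi j
          have := min_le_left (a.val j) (b.val j)
          omega
        · have := hmin j0
          have := min_eq_left hle
          omega
      · right
        refine (Subtype.ext ?_).symm
        refine (eq_of_coord π b.2 i j0 ?_ ?_).trans hi.symm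
        · intro j
          have := hmin j
          have := congrFun hi j
          have := min_le_right (a.val j) (b.val j)
          omega
        · have := hmin j0
          have := min_eq_right hle
          omega
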